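/- If there exists a g1-regular (K1, F1, Z1, S1) PDA in which every row contains the same number of stars, where g1 ≥ 2, then there exists a (g1−1)-regular (K1, (g1−1)F1, (g1−1)Z1, g1·S1) base PDA with parameter λ = g1−1. -/

import Mathlib

open Finset

/-- A (K,F,Z,S) placement delivery array: an F×K array over {*} ∪ [1:S],
    with `none` playing the role of `*`. Columns are indexed by `κ`. -/
def IsPDA {F S : ℕ} {κ : Type} [Fintype κ]
    (Z : ℕ) (P : Fin F → κ → Option (Fin S)) : Prop :=
  -- C1: each column contains exactly Z stars
  (∀ k : κ, (Finset.univ.filter (fun j : Fin F => P j k = none)).card = Z) ∧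
  -- C2: every integer occurs at least once
  (∀ s : Fin S, ∃ j k, P j k = some s) ∧
  -- C3: the 2×2 star-crossing condition
  (∀ j₁ j₂ : Fin F, ∀ k₁ k₂ : κ, ∀ s : Fin S,
    (j₁, k₁) ≠ (j₂, k₂) → P j₁ k₁ = some s → P j₂ k₂ = some s →
    P j₁ k₂ = none ∧ P j₂ k₁ = none)

/-- `P` is `g`-regular: every integer appears exactly `g` times. -/
def PDARegular {F S : ℕ} {κ : Type} [Fintype κ]
    (g : ℕ) (P : Fin F → κ → Option (Fin S)) : Prop :=
  ∀ s : Fin S, (Finset.univ.filter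
    (fun jk : Fin F × κ => P jk.1 jk.2 = some s)).card = g

/-- A base PDA with parameter `lam`: a PDA with `lam ∣ F`, `lam ∣ Z`,
    star pattern row-periodic with period `F/lam` (C4), and a star-row
    assignment `φ` into the first `F/lam` rows with all fibers of size
    `lam*S/F` (C5, stated multiplicatively: `card * F = lam * S`). -/
def IsBasePDA {F S : ℕ} {κ : Type} [Fintype κ]
    (Z lam : ℕ) (P : Fin F → κ → Option (Fin S)) : Prop :=
  IsPDA Z P ∧ 0 < lam ∧ lam ∣ F ∧ lam ∣ Z ∧
  (∀ j₁ j₂ : Fin F, ∀ k : κ, j₁.val % (F / lam) = j₂.val % (F / lam) →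
    (P j₁ k = none ↔ P j₂ k = none)) ∧
  (∃ φ : Fin S → Fin F, (∀ s, (φ s).val < F / lam) ∧
    (∀ s : Fin S, ∀ j : Fin F, ∀ k : κ, P j k = some s → P (φ s) k = none) ∧
    (∀ r : Fin F, r.val < F / lam →
      (Finset.univ.filter (fun s : Fin S => φ s = r)).card * F = lam * S))

section Helpers

lemma pda_mod_helper (g t i : ℕ) (ht : t < g) (hi : i < g - 1) :
    (t + i + 1) % g ≠ t ∧ (t + i + 1) % g < g := by
  have hg : 0 < g := by omega
  refine ⟨?_, Nat.mod_lt _ hg⟩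
  rcases Nat.lt_or_ge (t + i + 1) g with h | h
  · rw [Nat.mod_eq_of_lt h]; omega
  · have h2 : t + i + 1 - g < g := by omega
    rw [Nat.mod_eq_sub_mod h, Nat.mod_eq_of_lt h2]; omega

lemma pda_mod_inv_helper (g m t : ℕ) (ht : t < g) (hm : m < g) (hne : t ≠ m) :
    (g + m - t - 1) % g < g - 1 ∧ (t + (g + m - t - 1) % g + 1) % g = m := by
  rcases Nat.lt_or_ge t m with h | h
  · have h1 : g + m - t - 1 = g + (m - t - 1) := by omega
    have h2 : (m - t - 1) % g = m - t - 1 := Nat.mod_eq_of_lt (by omega)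
    rw [h1, Nat.add_mod_left, h2]
    refine ⟨by omega, ?_⟩
    have h3 : t + (m - t - 1) + 1 = m := by omega
    rw [h3, Nat.mod_eq_of_lt hm]
  · have h' : m < t := by omega
    have h1 : (g + m - t - 1) % g = g + m - t - 1 := Nat.mod_eq_of_lt (by omega)
    rw [h1]
    refine ⟨by omega, ?_⟩
    have h3 : t + (g + m - t - 1) + 1 = g + m := by omega
    rw [h3, Nat.add_mod_left, Nat.mod_eq_of_lt hm]

lemma pda_mod_uniq (g t i₁ i₂ : ℕ) (h₁ : i₁ < g - 1) (h₂ : i₂ < g - 1)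
    (h : (t + i₁ + 1) % g = (t + i₂ + 1) % g) : i₁ = i₂ := by
  have e1 : t + i₁ + 1 = (t + 1) + i₁ := by omega
  have e2 : t + i₂ + 1 = (t + 1) + i₂ := by omega
  rw [e1, e2] at h
  have h' : i₁ ≡ i₂ [MOD g] :=
    Nat.ModEq.add_left_cancel' (t + 1) (show (t+1)+i₁ ≡ (t+1)+i₂ [MOD g] from h)
  rw [Nat.ModEq, Nat.mod_eq_of_lt (by omega), Nat.mod_eq_of_lt (by omega)] at h'
  exact h'

lemma pda_pack_inj {S₁ : ℕ} (m₁ m₂ s₁ s₂ : ℕ) (hs₁ : s₁ < S₁) (hs₂ : s₂ < S₁)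
    (h : m₁ * S₁ + s₁ = m₂ * S₁ + s₂) : m₁ = m₂ ∧ s₁ = s₂ := by
  have hS : 0 < S₁ := by omega
  have e1 : (m₁ * S₁ + s₁) % S₁ = s₁ := by rw [Nat.mul_comm, Nat.mul_add_mod, Nat.mod_eq_of_lt hs₁]
  have e2 : (m₂ * S₁ + s₂) % S₁ = s₂ := by rw [Nat.mul_comm, Nat.mul_add_mod, Nat.mod_eq_of_lt hs₂]
  have hs : s₁ = s₂ := by rw [← e1, h, e2]
  refine ⟨?_, hs⟩
  have hm : m₁ * S₁ = m₂ * S₁ := by omega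
  exact Nat.eq_of_mul_eq_mul_right hS hm

lemma pda_pack_div (m s S₁ : ℕ) (hs : s < S₁) : (m * S₁ + s) / S₁ = m := by
  have hS : 0 < S₁ := by omega
  rw [Nat.mul_comm m S₁, Nat.mul_add_div hS, Nat.div_eq_of_lt hs]
  omega

lemma pda_pack_mod (m s S₁ : ℕ) (hs : s < S₁) : (m * S₁ + s) % S₁ = s := by
  rw [Nat.mul_comm m S₁, Nat.mul_add_mod, Nat.mod_eq_of_lt hs]

lemma pda_pack_lt {g₁ S₁ : ℕ} {m : ℕ} (hm : m < g₁) (s : Fin S₁) :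
    m * S₁ + s.val < g₁ * S₁ := by
  have hs := s.isLt
  have h2 : m * S₁ + S₁ = (m + 1) * S₁ := by ring
  have h3 : (m + 1) * S₁ ≤ g₁ * S₁ := Nat.mul_le_mul_right _ (by omega)
  omega

lemma pda_row_build {g₁ F₁ : ℕ} (i : ℕ) (hi : i < g₁ - 1) (r : Fin F₁) :
    i * F₁ + r.val < (g₁ - 1) * F₁ := by
  have hr := r.isLt
  have h1 : i * F₁ + r.val < i * F₁ + F₁ := by omega
  have h2 : i * F₁ + F₁ = (i + 1) * F₁ := by ring
  have h3 : (i + 1) * F₁ ≤ (g₁ - 1) * F₁ := Nat.mul_le_mul_right _ (by omega)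
  omega

end Helpers

section Occ

variable {F₁ K₁ S₁ g₁ : ℕ}

noncomputable def occList (P : Fin F₁ → Fin K₁ → Option (Fin S₁)) (s : Fin S₁) :
    List (Fin F₁ × Fin K₁) :=
  ((univ : Finset (Fin F₁ × Fin K₁)).filter (fun jk => P jk.1 jk.2 = some s)).toList

lemma mem_occList {P : Fin F₁ → Fin K₁ → Option (Fin S₁)} {s : Fin S₁}
    {p : Fin F₁ × Fin K₁} : p ∈ occList P s ↔ P p.1 p.2 = some s := by
  simp [occList]

lemma nodup_occList (P : Fin F₁ → Fin K₁ → Option (Fin S₁)) (s : Fin S₁) :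
    (occList P s).Nodup := Finset.nodup_toList _

lemma length_occList {P : Fin F₁ → Fin K₁ → Option (Fin S₁)}
    (hreg : PDARegular g₁ P) (s : Fin S₁) : (occList P s).length = g₁ := by
  rw [occList, Finset.length_toList]; exact hreg s

noncomputable def occIdx (P : Fin F₁ → Fin K₁ → Option (Fin S₁)) (s : Fin S₁)
    (p : Fin F₁ × Fin K₁) : ℕ :=
  List.idxOf p (occList P s)

noncomputable def occP {P : Fin F₁ → Fin K₁ → Option (Fin S₁)} (hreg : PDARegular g₁ P)
    (s : Fin S₁) (t : Fin g₁) : Fin F₁ × Fin K₁ :=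
  (occList P s).get ⟨t.val, by rw [length_occList hreg]; exact t.isLt⟩

lemma occP_spec {P : Fin F₁ → Fin K₁ → Option (Fin S₁)} (hreg : PDARegular g₁ P)
    (s : Fin S₁) (t : Fin g₁) :
    P (occP hreg s t).1 (occP hreg s t).2 = some s :=
  mem_occList.mp (List.get_mem _ _)

lemma occIdx_occP {P : Fin F₁ → Fin K₁ → Option (Fin S₁)} (hreg : PDARegular g₁ P)
    (s : Fin S₁) (t : Fin g₁) : occIdx P s (occP hreg s t) = t.val :=
  List.get_idxOf (nodup_occList P s)
    ⟨t.val, by rw [length_occList hreg]; exact t.isLt⟩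

lemma occIdx_lt {P : Fin F₁ → Fin K₁ → Option (Fin S₁)} (hreg : PDARegular g₁ P)
    {s : Fin S₁} {j : Fin F₁} {k : Fin K₁} (h : P j k = some s) :
    occIdx P s (j, k) < g₁ := by
  rw [occIdx, ← length_occList hreg s]
  exact List.idxOf_lt_length_iff.mpr ((mem_occList (p := (j, k))).mpr h)

lemma occP_occIdx' {P : Fin F₁ → Fin K₁ → Option (Fin S₁)} (hreg : PDARegular g₁ P)
    {s : Fin S₁} {j : Fin F₁} {k : Fin K₁} (h : P j k = some s)
    (hlt : occIdx P s (j, k) < g₁) :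
    occP hreg s ⟨occIdx P s (j, k), hlt⟩ = (j, k) :=
  List.idxOf_get (a := (j, k)) (l := occList P s)
    (by rw [length_occList hreg]; exact hlt)

lemma occP_inj {P : Fin F₁ → Fin K₁ → Option (Fin S₁)} (hreg : PDARegular g₁ P)
    {s : Fin S₁} {t₁ t₂ : Fin g₁} (h : occP hreg s t₁ = occP hreg s t₂) : t₁ = t₂ := by
  have h1 := occIdx_occP hreg s t₁
  have h2 := occIdx_occP hreg s t₂
  rw [h] at h1
  exact Fin.ext (by omega)

lemma pda_cross {P : Fin F₁ → Fin K₁ → Option (Fin S₁)}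
    (hC3 : ∀ j₁ j₂ : Fin F₁, ∀ k₁ k₂ : Fin K₁, ∀ s : Fin S₁,
      (j₁, k₁) ≠ (j₂, k₂) → P j₁ k₁ = some s → P j₂ k₂ = some s →
      P j₁ k₂ = none ∧ P j₂ k₁ = none)
    {s : Fin S₁} {p₁ p₂ : Fin F₁ × Fin K₁} (h₁ : P p₁.1 p₁.2 = some s)
    (h₂ : P p₂.1 p₂.2 = some s) (hne : p₁ ≠ p₂) :
    P p₁.1 p₂.2 = none ∧ P p₂.1 p₁.2 = none ∧ p₁.1 ≠ p₂.1 ∧ p₁.2 ≠ p₂.2 := by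
  have hne' : (p₁.1, p₁.2) ≠ (p₂.1, p₂.2) := by
    obtain ⟨a, b⟩ := p₁; obtain ⟨cc, d⟩ := p₂; exact hne
  obtain ⟨ha, hb⟩ := hC3 p₁.1 p₂.1 p₁.2 p₂.2 s hne' h₁ h₂
  refine ⟨ha, hb, fun hEq => ?_, fun hEq => ?_⟩
  · rw [hEq] at h₁; rw [h₁] at hb; simp at hb
  · rw [hEq] at h₁; rw [h₁] at ha; simp at ha

def pdaRowOf (g₁ F₁ : ℕ) (j' : Fin ((g₁ - 1) * F₁)) : Fin F₁ :=
  ⟨j'.val % F₁, Nat.mod_lt _ (Nat.pos_of_ne_zero (fun hF => by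
    subst hF; exact absurd j'.isLt (by simp)))⟩

lemma pda_div_lt {g₁ F₁ : ℕ} (j' : Fin ((g₁ - 1) * F₁)) : j'.val / F₁ < g₁ - 1 := by
  have hF : 0 < F₁ := Nat.pos_of_ne_zero (fun hF => by
    subst hF; exact absurd j'.isLt (by simp))
  exact (Nat.div_lt_iff_lt_mul hF).mpr j'.isLt

lemma pda_row_decomp {g₁ F₁ : ℕ} (j' : Fin ((g₁ - 1) * F₁)) :
    j'.val = j'.val / F₁ * F₁ + j'.val % F₁ := by
  conv_rhs => rw [Nat.mul_comm]
  exact (Nat.div_add_mod _ _).symm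

noncomputable def baseQ {F₁ K₁ S₁ : ℕ} (g₁ : ℕ) (hg : 0 < g₁) (P : Fin F₁ → Fin K₁ → Option (Fin S₁))
    (j' : Fin ((g₁ - 1) * F₁)) (k : Fin K₁) : Option (Fin (g₁ * S₁)) :=
  (P (pdaRowOf g₁ F₁ j') k).map (fun s =>
    ⟨(occIdx P s (pdaRowOf g₁ F₁ j', k) + j'.val / F₁ + 1) % g₁ * S₁ + s.val,
      pda_pack_lt (Nat.mod_lt _ hg) s⟩)

lemma baseQ_eq_none {F₁ K₁ S₁ g₁ : ℕ} (hg : 0 < g₁)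
    (P : Fin F₁ → Fin K₁ → Option (Fin S₁)) (j' : Fin ((g₁ - 1) * F₁)) (k : Fin K₁) :
    baseQ g₁ hg P j' k = none ↔ P (pdaRowOf g₁ F₁ j') k = none := by
  simp [baseQ]

lemma baseQ_eq_some {F₁ K₁ S₁ g₁ : ℕ} (hg : 0 < g₁)
    (P : Fin F₁ → Fin K₁ → Option (Fin S₁)) (j' : Fin ((g₁ - 1) * F₁)) (k : Fin K₁)
    (σ : Fin (g₁ * S₁)) :
    baseQ g₁ hg P j' k = some σ ↔ ∃ s, P (pdaRowOf g₁ F₁ j') k = some s ∧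
      σ.val = (occIdx P s (pdaRowOf g₁ F₁ j', k) + j'.val / F₁ + 1) % g₁ * S₁ + s.val := by
  simp only [baseQ, Option.map_eq_some_iff]
  constructor
  · rintro ⟨s, hs, rfl⟩; exact ⟨s, hs, rfl⟩
  · rintro ⟨s, hs, hval⟩; exact ⟨s, hs, Fin.ext hval.symm⟩

def sOfFin {g₁ S₁ : ℕ} (σ : Fin (g₁ * S₁)) : Fin S₁ :=
  ⟨σ.val % S₁, Nat.mod_lt _ (Nat.pos_of_ne_zero (fun hS => by
    subst hS; exact absurd σ.isLt (by simp)))⟩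

def mOfFin {g₁ S₁ : ℕ} (σ : Fin (g₁ * S₁)) : Fin g₁ :=
  ⟨σ.val / S₁, by
    have hS : 0 < S₁ := Nat.pos_of_ne_zero (fun hS => by
      subst hS; exact absurd σ.isLt (by simp))
    exact (Nat.div_lt_iff_lt_mul hS).mpr σ.isLt⟩

lemma sOf_mOf_val {g₁ S₁ : ℕ} (σ : Fin (g₁ * S₁)) :
    σ.val = (mOfFin σ).val * S₁ + (sOfFin σ).val := by
  show σ.val = σ.val / S₁ * S₁ + σ.val % S₁
  conv_rhs => rw [Nat.mul_comm]
  exact (Nat.div_add_mod _ _).symm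

lemma mOf_sOf_eq {g₁ S₁ : ℕ} (σ : Fin (g₁ * S₁)) (m : Fin g₁) (s : Fin S₁)
    (h : σ.val = m.val * S₁ + s.val) : mOfFin σ = m ∧ sOfFin σ = s := by
  have h2 := pda_pack_inj _ _ _ _ (sOfFin σ).isLt s.isLt ((sOf_mOf_val σ).symm.trans h)
  exact ⟨Fin.ext h2.1, Fin.ext h2.2⟩

noncomputable def cellOf {F₁ K₁ S₁ g₁ : ℕ} {P : Fin F₁ → Fin K₁ → Option (Fin S₁)}
    (hg : 2 ≤ g₁) (hreg : PDARegular g₁ P) (s : Fin S₁) (m t : Fin g₁) :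
    Fin ((g₁ - 1) * F₁) × Fin K₁ :=
  (⟨((g₁ + m.val - t.val - 1) % g₁ * F₁ + (occP hreg s t).1.val) % ((g₁ - 1) * F₁),
      Nat.mod_lt _ (Nat.mul_pos (by omega)
        (lt_of_le_of_lt (Nat.zero_le _) (occP hreg s t).1.isLt))⟩,
   (occP hreg s t).2)

lemma cellOf_snd {F₁ K₁ S₁ g₁ : ℕ} {P : Fin F₁ → Fin K₁ → Option (Fin S₁)}
    (hg : 2 ≤ g₁) (hreg : PDARegular g₁ P) (s : Fin S₁) (m t : Fin g₁) :
    (cellOf hg hreg s m t).2 = (occP hreg s t).2 := rfl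

lemma cellOf_val {F₁ K₁ S₁ g₁ : ℕ} {P : Fin F₁ → Fin K₁ → Option (Fin S₁)}
    (hg : 2 ≤ g₁) (hreg : PDARegular g₁ P) (s : Fin S₁) {m t : Fin g₁} (hne : t ≠ m) :
    ((cellOf hg hreg s m t).1 : ℕ) =
      (g₁ + m.val - t.val - 1) % g₁ * F₁ + (occP hreg s t).1.val := by
  have hne' : t.val ≠ m.val := fun h => hne (Fin.ext h)
  have hilt := (pda_mod_inv_helper g₁ m.val t.val t.isLt m.isLt hne').1
  exact Nat.mod_eq_of_lt (pda_row_build _ hilt _)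

lemma cellOf_row {F₁ K₁ S₁ g₁ : ℕ} {P : Fin F₁ → Fin K₁ → Option (Fin S₁)}
    (hg : 2 ≤ g₁) (hreg : PDARegular g₁ P) (s : Fin S₁) {m t : Fin g₁} (hne : t ≠ m) :
    pdaRowOf g₁ F₁ (cellOf hg hreg s m t).1 = (occP hreg s t).1 := by
  apply Fin.ext
  show ((cellOf hg hreg s m t).1 : ℕ) % F₁ = _
  rw [cellOf_val hg hreg s hne]
  exact pda_pack_mod _ _ _ (occP hreg s t).1.isLt

lemma cellOf_div {F₁ K₁ S₁ g₁ : ℕ} {P : Fin F₁ → Fin K₁ → Option (Fin S₁)}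
    (hg : 2 ≤ g₁) (hreg : PDARegular g₁ P) (s : Fin S₁) {m t : Fin g₁} (hne : t ≠ m) :
    ((cellOf hg hreg s m t).1 : ℕ) / F₁ = (g₁ + m.val - t.val - 1) % g₁ := by
  rw [cellOf_val hg hreg s hne]
  exact pda_pack_div _ _ _ (occP hreg s t).1.isLt

lemma baseQ_cellOf {F₁ K₁ S₁ g₁ : ℕ} {P : Fin F₁ → Fin K₁ → Option (Fin S₁)}
    (hg : 2 ≤ g₁) (hg0 : 0 < g₁) (hreg : PDARegular g₁ P) (s : Fin S₁) {m t : Fin g₁}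
    (hne : t ≠ m) :
    baseQ g₁ hg0 P (cellOf hg hreg s m t).1 (cellOf hg hreg s m t).2 =
      some ⟨m.val * S₁ + s.val, pda_pack_lt m.isLt s⟩ := by
  have hne' : t.val ≠ m.val := fun h => hne (Fin.ext h)
  obtain ⟨hilt, himod⟩ := pda_mod_inv_helper g₁ m.val t.val t.isLt m.isLt hne'
  apply (baseQ_eq_some hg0 P _ _ _).mpr
  refine ⟨s, ?_, ?_⟩
  · rw [cellOf_row hg hreg s hne]
    exact occP_spec hreg s t
  · show (m.val * S₁ + s.val : ℕ) = _
    rw [cellOf_row hg hreg s hne, cellOf_snd hg hreg s m t, Prod.mk.eta,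
        occIdx_occP hreg s t, cellOf_div hg hreg s hne, himod]

noncomputable def phiOf {F₁ K₁ S₁ g₁ : ℕ} {P : Fin F₁ → Fin K₁ → Option (Fin S₁)} (hg : 2 ≤ g₁)
    (hreg : PDARegular g₁ P) (σ : Fin (g₁ * S₁)) : Fin ((g₁ - 1) * F₁) :=
  ⟨(occP hreg (sOfFin σ) (mOfFin σ)).1.val,
    lt_of_lt_of_le (occP hreg (sOfFin σ) (mOfFin σ)).1.isLt
      (Nat.le_mul_of_pos_left _ (by omega))⟩

end Occ

/-- a g₁-regular (K₁,F₁,Z₁,S₁) PDA with the same number of stars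
    in each row (g₁ ≥ 2) can be transformed into a (g₁−1)-regular
    (K₁,(g₁−1)F₁,(g₁−1)Z₁,g₁S₁) base PDA with parameter λ = g₁−1. -/
theorem base_pda_transform (K₁ F₁ Z₁ S₁ g₁ : ℕ) (hg : 2 ≤ g₁)
    (h : ∃ P : Fin F₁ → Fin K₁ → Option (Fin S₁),
      IsPDA Z₁ P ∧ PDARegular g₁ P ∧
      ∃ c, ∀ j : Fin F₁,
        (Finset.univ.filter (fun k : Fin K₁ => P j k = none)).card = c) :
    ∃ Q : Fin ((g₁ - 1) * F₁) → Fin K₁ → Option (Fin (g₁ * S₁)),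
      IsBasePDA ((g₁ - 1) * Z₁) (g₁ - 1) Q ∧ PDARegular (g₁ - 1) Q := by
  classical
  obtain ⟨P, ⟨hC1, hC2, hC3⟩, hreg, c, hc⟩ := h
  have hg1 : 0 < g₁ := by omega
  have hFdiv : ((g₁ - 1) * F₁) / (g₁ - 1) = F₁ := Nat.mul_div_cancel_left _ (by omega)
  have hcross : ∀ (s : Fin S₁) (t₁ t₂ : Fin g₁), t₁ ≠ t₂ →
      P (occP hreg s t₁).1 (occP hreg s t₂).2 = none ∧
      (occP hreg s t₁).1 ≠ (occP hreg s t₂).1 ∧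
      (occP hreg s t₁).2 ≠ (occP hreg s t₂).2 := by
    intro s t₁ t₂ hne
    have h := pda_cross hC3 (occP_spec hreg s t₁) (occP_spec hreg s t₂)
      (fun hEq => hne (occP_inj hreg hEq))
    exact ⟨h.1, h.2.2.1, h.2.2.2⟩
  refine ⟨baseQ g₁ hg1 P, ⟨⟨?_, ?_, ?_⟩, by omega, dvd_mul_right _ _, dvd_mul_right _ _,
    ?_, ?_⟩, ?_⟩
  · -- C1
    intro k
    have hset : (univ.filter fun j' : Fin ((g₁ - 1) * F₁) => baseQ g₁ hg1 P j' k = none) =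
        (univ.filter fun j' : Fin ((g₁ - 1) * F₁) => P (pdaRowOf g₁ F₁ j') k = none) := by
      ext j'
      simp only [mem_filter, mem_univ, true_and]
      exact baseQ_eq_none hg1 P j' k
    rw [hset]
    have hcard : ((univ : Finset (Fin (g₁ - 1))) ×ˢ
        (univ.filter fun r : Fin F₁ => P r k = none)).card = (g₁ - 1) * Z₁ := by
      rw [Finset.card_product, Finset.card_univ, Fintype.card_fin, hC1 k]
    rw [← hcard]
    refine Finset.card_bij' (fun j' _ => (⟨j'.val / F₁, pda_div_lt j'⟩, pdaRowOf g₁ F₁ j'))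
      (fun ir _ => ⟨ir.1.val * F₁ + ir.2.val, pda_row_build _ ir.1.isLt _⟩)
      ?hi ?hj ?left ?right
    case hi =>
      intro j' hj'
      simp only [mem_filter, mem_univ, true_and] at hj'
      simp only [Finset.mem_product, mem_filter, mem_univ, true_and]
      exact hj'
    case hj =>
      rintro ⟨i1, r⟩ hir
      simp only [Finset.mem_product, mem_filter, mem_univ, true_and] at hir
      simp only [mem_filter, mem_univ, true_and]
      have hrow : pdaRowOf g₁ F₁ ⟨i1.val * F₁ + r.val, pda_row_build _ i1.isLt _⟩ = r :=
        Fin.ext (pda_pack_mod _ _ _ r.isLt)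
      rw [hrow]
      exact hir
    case left =>
      intro j' hj'
      apply Fin.ext
      exact (pda_row_decomp j').symm
    case right =>
      rintro ⟨i1, r⟩ hir
      have hdiv : (i1.val * F₁ + r.val) / F₁ = i1.val := pda_pack_div _ _ _ r.isLt
      have hrow : pdaRowOf g₁ F₁ ⟨i1.val * F₁ + r.val, pda_row_build _ i1.isLt _⟩ = r :=
        Fin.ext (pda_pack_mod _ _ _ r.isLt)
      exact Prod.ext (Fin.ext hdiv) hrow
  · -- C2
    intro σ
    have hmlt := (pda_mod_helper g₁ (mOfFin σ).val 0 (mOfFin σ).isLt (by omega))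
    have htne : (⟨((mOfFin σ).val + 0 + 1) % g₁, hmlt.2⟩ : Fin g₁) ≠ mOfFin σ :=
      fun hEq => hmlt.1 (congrArg Fin.val hEq)
    refine ⟨(cellOf hg hreg (sOfFin σ) (mOfFin σ) ⟨((mOfFin σ).val + 0 + 1) % g₁, hmlt.2⟩).1,
      (cellOf hg hreg (sOfFin σ) (mOfFin σ) ⟨((mOfFin σ).val + 0 + 1) % g₁, hmlt.2⟩).2, ?_⟩
    rw [baseQ_cellOf hg hg1 hreg (sOfFin σ) htne]
    congr 1
    exact Fin.ext (sOf_mOf_val σ).symm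
  · -- C3
    intro j₁ j₂ k₁ k₂ σ hne h1 h2
    obtain ⟨s₁, hs₁, hval₁⟩ := (baseQ_eq_some hg1 P j₁ k₁ σ).mp h1
    obtain ⟨s₂, hs₂, hval₂⟩ := (baseQ_eq_some hg1 P j₂ k₂ σ).mp h2
    obtain ⟨hmm, hss⟩ := pda_pack_inj _ _ _ _ s₁.isLt s₂.isLt (hval₁.symm.trans hval₂)
    have hseq : s₁ = s₂ := Fin.ext hss
    subst hseq
    have ht₁ := occIdx_lt hreg hs₁
    have ht₂ := occIdx_lt hreg hs₂
    by_cases htt : occIdx P s₁ (pdaRowOf g₁ F₁ j₁, k₁) = occIdx P s₁ (pdaRowOf g₁ F₁ j₂, k₂)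
    · exfalso
      have mem₁ : (pdaRowOf g₁ F₁ j₁, k₁) ∈ occList P s₁ :=
        (mem_occList (p := (pdaRowOf g₁ F₁ j₁, k₁))).mpr hs₁
      have mem₂ : (pdaRowOf g₁ F₁ j₂, k₂) ∈ occList P s₁ :=
        (mem_occList (p := (pdaRowOf g₁ F₁ j₂, k₂))).mpr hs₂
      have hpp : (pdaRowOf g₁ F₁ j₁, k₁) = (pdaRowOf g₁ F₁ j₂, k₂) :=
        (List.idxOf_inj mem₁).mp htt
      have hr : pdaRowOf g₁ F₁ j₁ = pdaRowOf g₁ F₁ j₂ := congrArg Prod.fst hpp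
      have hk : k₁ = k₂ := congrArg Prod.snd hpp
      have hii : j₁.val / F₁ = j₂.val / F₁ := by
        apply pda_mod_uniq g₁ (occIdx P s₁ (pdaRowOf g₁ F₁ j₁, k₁)) _ _
          (pda_div_lt j₁) (pda_div_lt j₂)
        conv_rhs => rw [htt]
        exact hmm
      have hrv : j₁.val % F₁ = j₂.val % F₁ := congrArg Fin.val hr
      have hjj : j₁ = j₂ := by
        apply Fin.ext
        rw [pda_row_decomp j₁, pda_row_decomp j₂, hii, hrv]
      exact hne (by rw [hjj, hk])
    · have htne : (⟨occIdx P s₁ (pdaRowOf g₁ F₁ j₁, k₁), ht₁⟩ : Fin g₁) ≠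
          ⟨occIdx P s₁ (pdaRowOf g₁ F₁ j₂, k₂), ht₂⟩ :=
        fun hEq => htt (congrArg Fin.val hEq)
      have hcell₁ := occP_occIdx' hreg hs₁ ht₁
      have hcell₂ := occP_occIdx' hreg hs₂ ht₂
      obtain ⟨hstar, -, -⟩ := hcross s₁ _ _ htne
      rw [hcell₁, hcell₂] at hstar
      obtain ⟨hstar', -, -⟩ := hcross s₁ _ _ (Ne.symm htne)
      rw [hcell₁, hcell₂] at hstar'
      constructor
      · exact (baseQ_eq_none hg1 P j₁ k₂).mpr hstar
      · exact (baseQ_eq_none hg1 P j₂ k₁).mpr hstar'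
  · -- periodicity
    intro j₁ j₂ k hmod
    rw [hFdiv] at hmod
    have hr : pdaRowOf g₁ F₁ j₁ = pdaRowOf g₁ F₁ j₂ := Fin.ext hmod
    rw [baseQ_eq_none hg1 P j₁ k, baseQ_eq_none hg1 P j₂ k, hr]
  · -- φ
    refine ⟨phiOf hg hreg, ?_, ?_, ?_⟩
    · intro σ
      rw [hFdiv]
      exact (occP hreg (sOfFin σ) (mOfFin σ)).1.isLt
    · intro σ j k hQ
      obtain ⟨s, hs, hval⟩ := (baseQ_eq_some hg1 P j k σ).mp hQ
      have ht := occIdx_lt hreg hs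
      have hms := mOf_sOf_eq σ ⟨(occIdx P s (pdaRowOf g₁ F₁ j, k) + j.val / F₁ + 1) % g₁,
        Nat.mod_lt _ hg1⟩ s hval
      have hmne : (⟨occIdx P s (pdaRowOf g₁ F₁ j, k), ht⟩ : Fin g₁) ≠ mOfFin σ := by
        rw [hms.1]
        intro hEq
        exact (pda_mod_helper g₁ _ _ ht (pda_div_lt j)).1 (congrArg Fin.val hEq).symm
      apply (baseQ_eq_none hg1 P _ k).mpr
      have hrowphi : pdaRowOf g₁ F₁ (phiOf hg hreg σ) =
          (occP hreg (sOfFin σ) (mOfFin σ)).1 := by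
        apply Fin.ext
        show (phiOf hg hreg σ).val % F₁ = _
        exact Nat.mod_eq_of_lt (occP hreg (sOfFin σ) (mOfFin σ)).1.isLt
      rw [hrowphi, hms.2]
      have hcell := occP_occIdx' hreg hs ht
      have hx := hcross s (mOfFin σ) ⟨occIdx P s (pdaRowOf g₁ F₁ j, k), ht⟩ (Ne.symm hmne)
      rw [hcell] at hx
      exact hx.1
    · intro r hr
      rw [hFdiv] at hr
      by_cases hS0 : S₁ = 0
      · subst hS0
        have h0 : (univ.filter fun σ : Fin (g₁ * 0) => phiOf hg hreg σ = r).card = 0 := by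
          apply Finset.card_eq_zero.mpr
          apply Finset.filter_eq_empty_iff.mpr
          intro σ _
          exact absurd σ.isLt (by simp)
        rw [h0]
        simp
      have hS : 0 < S₁ := Nat.pos_of_ne_zero hS0
      have hXY : (univ.filter fun σ : Fin (g₁ * S₁) => phiOf hg hreg σ = r).card =
          (univ.filter fun k : Fin K₁ => ¬ P (⟨r.val, hr⟩ : Fin F₁) k = none).card := by
        refine Finset.card_bij (fun σ _ => (occP hreg (sOfFin σ) (mOfFin σ)).2) ?hi ?inj ?surj
        case hi =>
          intro σ hσ
          simp only [mem_filter, mem_univ, true_and] at hσ ⊢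
          have hrow : (occP hreg (sOfFin σ) (mOfFin σ)).1 = (⟨r.val, hr⟩ : Fin F₁) := by
            apply Fin.ext
            have hv : (phiOf hg hreg σ).val = r.val := congrArg Fin.val hσ
            exact hv
          rw [← hrow, occP_spec hreg (sOfFin σ) (mOfFin σ)]
          simp
        case inj =>
          intro σ₁ h₁ σ₂ h₂ hkk
          simp only [mem_filter, mem_univ, true_and] at h₁ h₂
          have hrow₁ : (occP hreg (sOfFin σ₁) (mOfFin σ₁)).1 =
              (occP hreg (sOfFin σ₂) (mOfFin σ₂)).1 := by
            apply Fin.ext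
            have hv1 : (phiOf hg hreg σ₁).val = r.val := congrArg Fin.val h₁
            have hv2 : (phiOf hg hreg σ₂).val = r.val := congrArg Fin.val h₂
            exact hv1.trans hv2.symm
          have hcells : occP hreg (sOfFin σ₁) (mOfFin σ₁) =
              occP hreg (sOfFin σ₂) (mOfFin σ₂) := Prod.ext hrow₁ hkk
          have hsome : some (sOfFin σ₁) = some (sOfFin σ₂) := by
            rw [← occP_spec hreg (sOfFin σ₁) (mOfFin σ₁),
              ← occP_spec hreg (sOfFin σ₂) (mOfFin σ₂), hcells]
          have hs12 : sOfFin σ₁ = sOfFin σ₂ := Option.some_injective _ hsome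
          have hm12 : (mOfFin σ₁).val = (mOfFin σ₂).val := by
            rw [← occIdx_occP hreg (sOfFin σ₁) (mOfFin σ₁),
              ← occIdx_occP hreg (sOfFin σ₂) (mOfFin σ₂), hcells, hs12]
          apply Fin.ext
          rw [sOf_mOf_val σ₁, sOf_mOf_val σ₂, hs12, hm12]
        case surj =>
          intro k hk
          simp only [mem_filter, mem_univ, true_and] at hk
          obtain ⟨s, hsk⟩ := Option.ne_none_iff_exists'.mp hk
          have ht := occIdx_lt hreg hsk
          have hms := mOf_sOf_eq ⟨occIdx P s ((⟨r.val, hr⟩ : Fin F₁), k) * S₁ + s.val,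
            pda_pack_lt ht s⟩ ⟨occIdx P s ((⟨r.val, hr⟩ : Fin F₁), k), ht⟩ s rfl
          have hcell := occP_occIdx' hreg hsk ht
          refine ⟨⟨occIdx P s ((⟨r.val, hr⟩ : Fin F₁), k) * S₁ + s.val, pda_pack_lt ht s⟩, ?_, ?_⟩
          · simp only [mem_filter, mem_univ, true_and]
            apply Fin.ext
            show (occP hreg (sOfFin _) (mOfFin _)).1.val = r.val
            rw [hms.1, hms.2, hcell]
          · show (occP hreg (sOfFin _) (mOfFin _)).2 = k
            rw [hms.1, hms.2, hcell]
      have hcompl : ∀ j : Fin F₁,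
          (univ.filter fun k : Fin K₁ => ¬ P j k = none).card + c = K₁ := by
        intro j
        have hh := Finset.card_filter_add_card_filter_not
          (s := (univ : Finset (Fin K₁))) (p := fun k => P j k = none)
        rw [hc j, Finset.card_univ, Fintype.card_fin] at hh
        omega
      have hT1 : (univ.filter fun jk : Fin F₁ × Fin K₁ => ¬ P jk.1 jk.2 = none).card =
          F₁ * (K₁ - c) := by
        rw [Finset.card_eq_sum_card_fiberwise (f := Prod.fst) (t := univ)
          (fun x _ => mem_univ _)]
        have hfib : ∀ j : Fin F₁,
            ((univ.filter fun jk : Fin F₁ × Fin K₁ => ¬ P jk.1 jk.2 = none).filter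
              (fun jk => jk.1 = j)).card = K₁ - c := by
          intro j
          have hb : ((univ.filter fun jk : Fin F₁ × Fin K₁ => ¬ P jk.1 jk.2 = none).filter
              (fun jk => jk.1 = j)).card =
              (univ.filter fun k : Fin K₁ => ¬ P j k = none).card := by
            refine Finset.card_bij (fun jk _ => jk.2) ?_ ?_ ?_
            · intro jk hjk
              simp only [mem_filter, mem_univ, true_and] at hjk ⊢
              rw [← hjk.2]
              exact hjk.1
            · rintro ⟨a1, b1⟩ h1 ⟨a2, b2⟩ h2 hb12
              simp only [mem_filter, mem_univ, true_and] at h1 h2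
              exact Prod.ext (h1.2.trans h2.2.symm) hb12
            · intro k hk
              refine ⟨(j, k), ?_, rfl⟩
              simp only [mem_filter, mem_univ, true_and] at hk ⊢
              exact ⟨hk, trivial⟩
          rw [hb]
          have := hcompl j
          omega
        rw [Finset.sum_congr rfl (fun j _ => hfib j), Finset.sum_const, Finset.card_univ,
          Fintype.card_fin, smul_eq_mul]
      have hT2 : (univ.filter fun jk : Fin F₁ × Fin K₁ => ¬ P jk.1 jk.2 = none).card =
          S₁ * g₁ := by
        rw [Finset.card_eq_sum_card_fiberwise
          (f := fun jk : Fin F₁ × Fin K₁ => (P jk.1 jk.2).getD ⟨0, hS⟩) (t := univ)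
          (fun x _ => mem_univ _)]
        have hfib : ∀ s : Fin S₁,
            ((univ.filter fun jk : Fin F₁ × Fin K₁ => ¬ P jk.1 jk.2 = none).filter
              (fun jk => (P jk.1 jk.2).getD ⟨0, hS⟩ = s)).card = g₁ := by
          intro s
          have hset2 : ((univ.filter fun jk : Fin F₁ × Fin K₁ => ¬ P jk.1 jk.2 = none).filter
              (fun jk => (P jk.1 jk.2).getD ⟨0, hS⟩ = s)) =
              (univ.filter fun jk : Fin F₁ × Fin K₁ => P jk.1 jk.2 = some s) := by
            ext jk
            simp only [mem_filter, mem_univ, true_and]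
            constructor
            · rintro ⟨hne2, hgd⟩
              obtain ⟨s', hs'⟩ := Option.ne_none_iff_exists'.mp hne2
              rw [hs'] at hgd ⊢
              simp only [Option.getD_some] at hgd
              rw [hgd]
            · intro hsome
              rw [hsome]
              simp
          rw [hset2]
          exact hreg s
        rw [Finset.sum_congr rfl (fun s _ => hfib s), Finset.sum_const, Finset.card_univ,
          Fintype.card_fin, smul_eq_mul]
      have hYc : (univ.filter fun k : Fin K₁ => ¬ P (⟨r.val, hr⟩ : Fin F₁) k = none).card
          = K₁ - c := by
        have := hcompl ⟨r.val, hr⟩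
        omega
      have hfinal : F₁ * (K₁ - c) = S₁ * g₁ := by rw [← hT1, hT2]
      calc (univ.filter fun σ : Fin (g₁ * S₁) => phiOf hg hreg σ = r).card * ((g₁ - 1) * F₁)
          = (g₁ - 1) * (F₁ *
            (univ.filter fun σ : Fin (g₁ * S₁) => phiOf hg hreg σ = r).card) := by ring
        _ = (g₁ - 1) * (F₁ * (K₁ - c)) := by rw [hXY, hYc]
        _ = (g₁ - 1) * (S₁ * g₁) := by rw [hfinal]
        _ = (g₁ - 1) * (g₁ * S₁) := by ring
  · -- regularity
    intro σ
    have hTm : ((univ : Finset (Fin g₁)).filter fun t => ¬ t = mOfFin σ).card = g₁ - 1 := by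
      have hh := Finset.card_filter_add_card_filter_not
        (s := (univ : Finset (Fin g₁))) (p := fun t => t = mOfFin σ)
      rw [Finset.card_univ, Fintype.card_fin] at hh
      have h1 : ((univ : Finset (Fin g₁)).filter fun t => t = mOfFin σ).card = 1 := by
        rw [Finset.filter_eq', if_pos (mem_univ _), Finset.card_singleton]
      omega
    have hWT : (univ.filter fun jk : Fin ((g₁ - 1) * F₁) × Fin K₁ =>
        baseQ g₁ hg1 P jk.1 jk.2 = some σ).card =
        ((univ : Finset (Fin g₁)).filter fun t => ¬ t = mOfFin σ).card := by
      symm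
      refine Finset.card_bij (fun t _ => cellOf hg hreg (sOfFin σ) (mOfFin σ) t) ?hi ?inj ?surj
      case hi =>
        intro t ht
        simp only [mem_filter, mem_univ, true_and] at ht ⊢
        rw [baseQ_cellOf hg hg1 hreg (sOfFin σ) ht]
        congr 1
        exact Fin.ext (sOf_mOf_val σ).symm
      case inj =>
        intro t₁ h₁ t₂ h₂ hcc
        have hcc' : cellOf hg hreg (sOfFin σ) (mOfFin σ) t₁ =
            cellOf hg hreg (sOfFin σ) (mOfFin σ) t₂ := hcc
        have hsnd : (cellOf hg hreg (sOfFin σ) (mOfFin σ) t₁).2 =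
            (cellOf hg hreg (sOfFin σ) (mOfFin σ) t₂).2 := congrArg Prod.snd hcc'
        by_contra hne12
        exact (hcross (sOfFin σ) t₁ t₂ hne12).2.2 hsnd
      case surj =>
        rintro ⟨j', k⟩ hb
        simp only [mem_filter, mem_univ, true_and] at hb
        obtain ⟨s, hs, hval⟩ := (baseQ_eq_some hg1 P j' k σ).mp hb
        have ht := occIdx_lt hreg hs
        have hms := mOf_sOf_eq σ ⟨(occIdx P s (pdaRowOf g₁ F₁ j', k) + j'.val / F₁ + 1) % g₁,
          Nat.mod_lt _ hg1⟩ s hval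
        have hmhelp := pda_mod_helper g₁ (occIdx P s (pdaRowOf g₁ F₁ j', k)) (j'.val / F₁)
          ht (pda_div_lt j')
        refine ⟨⟨occIdx P s (pdaRowOf g₁ F₁ j', k), ht⟩, ?_, ?_⟩
        · simp only [mem_filter, mem_univ, true_and]
          rw [hms.1]
          intro hEq
          exact hmhelp.1 (congrArg Fin.val hEq).symm
        · show cellOf hg hreg (sOfFin σ) (mOfFin σ)
              ⟨occIdx P s (pdaRowOf g₁ F₁ j', k), ht⟩ = (j', k)
          have hcell := occP_occIdx' hreg hs ht
          have htm : (⟨occIdx P s (pdaRowOf g₁ F₁ j', k), ht⟩ : Fin g₁) ≠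
              (⟨(occIdx P s (pdaRowOf g₁ F₁ j', k) + j'.val / F₁ + 1) % g₁,
                Nat.mod_lt _ hg1⟩ : Fin g₁) :=
            fun hEq => hmhelp.1 (congrArg Fin.val hEq).symm
          rw [hms.1, hms.2]
          apply Prod.ext
          · apply Fin.ext
            rw [cellOf_val hg hreg s htm]
            have hinv := pda_mod_inv_helper g₁
              ((occIdx P s (pdaRowOf g₁ F₁ j', k) + j'.val / F₁ + 1) % g₁)
              (occIdx P s (pdaRowOf g₁ F₁ j', k)) ht (Nat.mod_lt _ hg1)
              (fun hEq2 => hmhelp.1 hEq2.symm)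
            have hiq : (g₁ + (occIdx P s (pdaRowOf g₁ F₁ j', k) + j'.val / F₁ + 1) % g₁
                - occIdx P s (pdaRowOf g₁ F₁ j', k) - 1) % g₁ = j'.val / F₁ :=
              pda_mod_uniq g₁ (occIdx P s (pdaRowOf g₁ F₁ j', k)) _ _ hinv.1 (pda_div_lt j')
                (by rw [hinv.2])
            show (g₁ + (occIdx P s (pdaRowOf g₁ F₁ j', k) + j'.val / F₁ + 1) % g₁
                - occIdx P s (pdaRowOf g₁ F₁ j', k) - 1) % g₁ * F₁
                + (occP hreg s ⟨occIdx P s (pdaRowOf g₁ F₁ j', k), ht⟩).1.val = j'.val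
            rw [hiq, hcell]
            exact (pda_row_decomp j').symm
          · show (occP hreg s ⟨occIdx P s (pdaRowOf g₁ F₁ j', k), ht⟩).2 = k
            rw [hcell]
    rw [hWT, hTm]
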